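/- (Base case of Theorem, single covering step) Let w ∈ Sym(n), t = (a,b) with a < b, w⁻¹(a) < w⁻¹(b) and ℓ(wt) = ℓ(w) + 1. With α = π/4, for every y ∈ [0, h_n], H(B_n(w), y) ≤ H(B_n(wt), y); moreover the inequality is strict exactly when Σ_{i=1}^{a-1} sin θ_{w⁻¹(i)} < y < Σ_{i=1}^{b} sin θ_{w⁻¹(i)}, where θ_k = (k-1)(π/2)/(n-1) + π/4. -/

import Mathlib

open Real Finset

/-- The underlying vector β_n^k(α). -/
noncomputable def beta (n : ℕ) (α : ℝ) (k : ℕ) : ℝ × ℝ :=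
  (-(Real.cos (((k : ℝ) - 1) * (Real.pi - 2 * α) / ((n : ℝ) - 1) + α)),
    Real.sin (((k : ℝ) - 1) * (Real.pi - 2 * α) / ((n : ℝ) - 1) + α))

/-- Coxeter length of a permutation = number of inversions. -/
def invLen {n : ℕ} (w : Equiv.Perm (Fin n)) : ℕ :=
  ((Finset.univ : Finset (Fin n × Fin n)).filter (fun p => p.1 < p.2 ∧ w p.2 < w p.1)).card

/-- The c-th vertex (partial sum of the first c edge vectors) of the border of w. -/
noncomputable def vert (n : ℕ) (α : ℝ) (w : Equiv.Perm (Fin n)) (c : ℕ) : ℝ × ℝ :=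
  ∑ i ∈ Finset.univ.filter (fun i : Fin n => (i : ℕ) < c), beta n α ((w⁻¹ i).val + 1)

/-- The border of w: the piecewise-linear path from the origin. -/
noncomputable def border (n : ℕ) (α : ℝ) (w : Equiv.Perm (Fin n)) : Set (ℝ × ℝ) :=
  ⋃ i ∈ Finset.range n, segment ℝ (vert n α w i) (vert n α w (i + 1))

/-- The strong Bruhat order: transitive extension of w <_B wt when ℓ(wt) = ℓ(w) + 1. -/
def BruhatLt {n : ℕ} (u v : Equiv.Perm (Fin n)) : Prop :=
  Relation.TransGen
    (fun x y => (∃ a b : Fin n, a ≠ b ∧ y = Equiv.swap a b * x) ∧ invLen y = invLen x + 1) u v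


noncomputable def cl (s x : ℝ) : ℝ := min (max x 0) s

lemma cl_of_nonpos {s x : ℝ} (hs : 0 ≤ s) (hx : x ≤ 0) : cl s x = 0 := by
  unfold cl; rw [max_eq_right hx, min_eq_left hs]

lemma cl_of_ge {s x : ℝ} (hs : 0 ≤ s) (hx : s ≤ x) : cl s x = s := by
  unfold cl; rw [max_eq_left (le_trans hs hx), min_eq_right hx]

lemma cl_of_mem {s x : ℝ} (h0 : 0 ≤ x) (hx : x ≤ s) : cl s x = x := by
  unfold cl; rw [max_eq_left h0, min_eq_left hx]

lemma cl_nonneg {s x : ℝ} (hs : 0 ≤ s) : 0 ≤ cl s x := le_min (le_max_right x 0) hs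

lemma cl_le {s x : ℝ} : cl s x ≤ s := min_le_right _ _

lemma cl_mono {s x y : ℝ} (h : x ≤ y) : cl s x ≤ cl s y :=
  min_le_min (max_le_max h le_rfl) le_rfl

lemma cl_lip {s x y : ℝ} (hs : 0 ≤ s) (h : x ≤ y) : cl s y - cl s x ≤ y - x := by
  unfold cl
  rcases le_total x 0 with h1|h1 <;> rcases le_total y 0 with h2|h2 <;>
    rcases le_total x s with h3|h3 <;> rcases le_total y s with h4|h4 <;>
    simp [max_eq_left, max_eq_right, min_eq_left, min_eq_right, *] <;> linarith

lemma cl_add {s s' x : ℝ} (hs : 0 ≤ s) (hs' : 0 ≤ s') :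
    cl (s + s') x = cl s x + cl s' (x - s) := by
  have hss : (0:ℝ) ≤ s + s' := by linarith
  unfold cl
  rcases le_total x 0 with h1|h1 <;> rcases le_total x s with h2|h2 <;>
    rcases le_total x (s + s') with h3|h3 <;>
    rcases le_total (x - s) 0 with h4|h4 <;> rcases le_total (x - s) s' with h5|h5 <;>
    simp [max_eq_left, max_eq_right, min_eq_left, min_eq_right, *] <;> linarith

lemma cl_zero (x : ℝ) : cl 0 x = 0 := min_eq_right (le_max_right x 0)
lemma tele (s : ℕ → ℝ) (hs : ∀ i, 0 ≤ s i) (c : ℕ) :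
    ∀ (m : ℕ) (x : ℝ), ∑ j ∈ Finset.Ico c (c+m), cl (s j) (x - ∑ k ∈ Finset.Ico c j, s k)
      = cl (∑ j ∈ Finset.Ico c (c+m), s j) x := by
  intro m
  induction m with
  | zero => intro x; simp [cl_zero]
  | succ m ih =>
      intro x
      rw [show c + (m+1) = (c+m)+1 from rfl, Finset.sum_Ico_succ_top (Nat.le_add_right c m),
        Finset.sum_Ico_succ_top (Nat.le_add_right c m), ih,
        cl_add (Finset.sum_nonneg (fun i _ => hs i)) (hs (c+m))]

lemma sum_split5 (f : ℕ → ℝ) {A B n : ℕ} (h1 : A < B) (h2 : B < n) :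
    ∑ j ∈ Finset.range n, f j = (∑ j ∈ Finset.range A, f j) + f A
      + (∑ j ∈ Finset.Ico (A+1) B, f j) + f B + (∑ j ∈ Finset.Ico (B+1) n, f j) := by
  rw [show Finset.range n = Finset.Ico 0 n from Finset.range_eq_Ico n,
    ← Finset.sum_Ico_consecutive f (Nat.zero_le A) (by omega : A ≤ n),
    Finset.sum_eq_sum_Ico_succ_bot (by omega : A < n) f,
    ← Finset.sum_Ico_consecutive f (by omega : A+1 ≤ B) (by omega : B ≤ n),
    Finset.sum_eq_sum_Ico_succ_bot (by omega : B < n) f,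
    ← Finset.range_eq_Ico]
  ring

lemma sum_split_at (f : ℕ → ℝ) {A j : ℕ} (h : A ≤ j) :
    ∑ k ∈ Finset.range j, f k = (∑ k ∈ Finset.range A, f k) + ∑ k ∈ Finset.Ico A j, f k := by
  rw [show Finset.range j = Finset.Ico 0 j from Finset.range_eq_Ico j,
    ← Finset.sum_Ico_consecutive f (Nat.zero_le A) h, ← Finset.range_eq_Ico]

set_option maxHeartbeats 1000000 in
lemma core (mv mu sv su S t : ℝ) (hsv : 0 < sv) (hsu : 0 < su) (hS : 0 ≤ S)
    (hmv1 : -1 ≤ mv) (hmv2 : mv ≤ 1) (hmu1 : -1 ≤ mu) (hmu2 : mu ≤ 1) (hm : mv < mu)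
    (hK1 : su - sv < mu * su - mv * sv) (hK2 : sv - su < mu * su - mv * sv)
    (ht0 : 0 < t) (htT : t < sv + S + su) :
    |cl S (t - sv) - cl S (t - su)| <
      mu * cl su t - mv * cl sv t + (mv * cl sv (t - su - S) - mu * cl su (t - sv - S)) := by
  rcases le_total t sv with h1|h1 <;> rcases le_total t su with h2|h2 <;>
    rcases le_total t (sv + S) with h3|h3 <;> rcases le_total t (su + S) with h4|h4
  · have e1 : cl sv t = t := cl_of_mem (le_of_lt ht0) h1
    have e2 : cl su t = t := cl_of_mem (le_of_lt ht0) h2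
    have e3 : cl su (t - sv - S) = 0 := cl_of_nonpos (le_of_lt hsu) (by linarith)
    have e4 : cl sv (t - su - S) = 0 := cl_of_nonpos (le_of_lt hsv) (by linarith)
    have e5 : cl S (t - sv) = 0 := cl_of_nonpos hS (by linarith)
    have e6 : cl S (t - su) = 0 := cl_of_nonpos hS (by linarith)
    rw [e1, e2, e3, e4, e5, e6, abs_lt]
    constructor <;> nlinarith
  · have e1 : cl sv t = t := cl_of_mem (le_of_lt ht0) h1
    have e2 : cl su t = t := cl_of_mem (le_of_lt ht0) h2
    have e3 : cl su (t - sv - S) = 0 := cl_of_nonpos (le_of_lt hsu) (by linarith)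
    have e4 : cl sv (t - su - S) = (t - su - S) := cl_of_mem (by linarith) (by linarith)
    have e5 : cl S (t - sv) = 0 := cl_of_nonpos hS (by linarith)
    have e6 : cl S (t - su) = 0 := cl_of_nonpos hS (by linarith)
    rw [e1, e2, e3, e4, e5, e6, abs_lt]
    constructor <;> nlinarith
  · have e1 : cl sv t = t := cl_of_mem (le_of_lt ht0) h1
    have e2 : cl su t = t := cl_of_mem (le_of_lt ht0) h2
    have e3 : cl su (t - sv - S) = (t - sv - S) := cl_of_mem (by linarith) (by linarith)
    have e4 : cl sv (t - su - S) = 0 := cl_of_nonpos (le_of_lt hsv) (by linarith)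
    have e5 : cl S (t - sv) = 0 := cl_of_nonpos hS (by linarith)
    have e6 : cl S (t - su) = 0 := cl_of_nonpos hS (by linarith)
    rw [e1, e2, e3, e4, e5, e6, abs_lt]
    constructor <;> nlinarith
  · have e1 : cl sv t = t := cl_of_mem (le_of_lt ht0) h1
    have e2 : cl su t = t := cl_of_mem (le_of_lt ht0) h2
    have e3 : cl su (t - sv - S) = (t - sv - S) := cl_of_mem (by linarith) (by linarith)
    have e4 : cl sv (t - su - S) = (t - su - S) := cl_of_mem (by linarith) (by linarith)
    have e5 : cl S (t - sv) = 0 := cl_of_nonpos hS (by linarith)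
    have e6 : cl S (t - su) = 0 := cl_of_nonpos hS (by linarith)
    rw [e1, e2, e3, e4, e5, e6, abs_lt]
    constructor <;> nlinarith
  · have e1 : cl sv t = t := cl_of_mem (le_of_lt ht0) h1
    have e2 : cl su t = su := cl_of_ge (le_of_lt hsu) h2
    have e3 : cl su (t - sv - S) = 0 := cl_of_nonpos (le_of_lt hsu) (by linarith)
    have e4 : cl sv (t - su - S) = 0 := cl_of_nonpos (le_of_lt hsv) (by linarith)
    have e5 : cl S (t - sv) = 0 := cl_of_nonpos hS (by linarith)
    have e6 : cl S (t - su) = (t - su) := cl_of_mem (by linarith) (by linarith)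
    rw [e1, e2, e3, e4, e5, e6, abs_lt]
    constructor <;> nlinarith
  · have e1 : cl sv t = t := cl_of_mem (le_of_lt ht0) h1
    have e2 : cl su t = su := cl_of_ge (le_of_lt hsu) h2
    have e3 : cl su (t - sv - S) = 0 := cl_of_nonpos (le_of_lt hsu) (by linarith)
    have e4 : cl sv (t - su - S) = (t - su - S) := cl_of_mem (by linarith) (by linarith)
    have e5 : cl S (t - sv) = 0 := cl_of_nonpos hS (by linarith)
    have e6 : cl S (t - su) = S := cl_of_ge hS (by linarith)
    rw [e1, e2, e3, e4, e5, e6, abs_lt]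
    constructor <;> nlinarith
  · have e1 : cl sv t = t := cl_of_mem (le_of_lt ht0) h1
    have e2 : cl su t = su := cl_of_ge (le_of_lt hsu) h2
    have e3 : cl su (t - sv - S) = (t - sv - S) := cl_of_mem (by linarith) (by linarith)
    have e4 : cl sv (t - su - S) = 0 := cl_of_nonpos (le_of_lt hsv) (by linarith)
    have e5 : cl S (t - sv) = 0 := cl_of_nonpos hS (by linarith)
    have e6 : cl S (t - su) = (t - su) := cl_of_mem (by linarith) (by linarith)
    rw [e1, e2, e3, e4, e5, e6, abs_lt]
    constructor <;> nlinarith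
  · have e1 : cl sv t = t := cl_of_mem (le_of_lt ht0) h1
    have e2 : cl su t = su := cl_of_ge (le_of_lt hsu) h2
    have e3 : cl su (t - sv - S) = (t - sv - S) := cl_of_mem (by linarith) (by linarith)
    have e4 : cl sv (t - su - S) = (t - su - S) := cl_of_mem (by linarith) (by linarith)
    have e5 : cl S (t - sv) = 0 := cl_of_nonpos hS (by linarith)
    have e6 : cl S (t - su) = S := cl_of_ge hS (by linarith)
    rw [e1, e2, e3, e4, e5, e6, abs_lt]
    constructor <;> nlinarith
  · have e1 : cl sv t = sv := cl_of_ge (le_of_lt hsv) h1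
    have e2 : cl su t = t := cl_of_mem (le_of_lt ht0) h2
    have e3 : cl su (t - sv - S) = 0 := cl_of_nonpos (le_of_lt hsu) (by linarith)
    have e4 : cl sv (t - su - S) = 0 := cl_of_nonpos (le_of_lt hsv) (by linarith)
    have e5 : cl S (t - sv) = (t - sv) := cl_of_mem (by linarith) (by linarith)
    have e6 : cl S (t - su) = 0 := cl_of_nonpos hS (by linarith)
    rw [e1, e2, e3, e4, e5, e6, abs_lt]
    constructor <;> nlinarith
  · have e1 : cl sv t = sv := cl_of_ge (le_of_lt hsv) h1
    have e2 : cl su t = t := cl_of_mem (le_of_lt ht0) h2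
    have e3 : cl su (t - sv - S) = 0 := cl_of_nonpos (le_of_lt hsu) (by linarith)
    have e4 : cl sv (t - su - S) = (t - su - S) := cl_of_mem (by linarith) (by linarith)
    have e5 : cl S (t - sv) = (t - sv) := cl_of_mem (by linarith) (by linarith)
    have e6 : cl S (t - su) = 0 := cl_of_nonpos hS (by linarith)
    rw [e1, e2, e3, e4, e5, e6, abs_lt]
    constructor <;> nlinarith
  · have e1 : cl sv t = sv := cl_of_ge (le_of_lt hsv) h1
    have e2 : cl su t = t := cl_of_mem (le_of_lt ht0) h2
    have e3 : cl su (t - sv - S) = (t - sv - S) := cl_of_mem (by linarith) (by linarith)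
    have e4 : cl sv (t - su - S) = 0 := cl_of_nonpos (le_of_lt hsv) (by linarith)
    have e5 : cl S (t - sv) = S := cl_of_ge hS (by linarith)
    have e6 : cl S (t - su) = 0 := cl_of_nonpos hS (by linarith)
    rw [e1, e2, e3, e4, e5, e6, abs_lt]
    constructor <;> nlinarith
  · have e1 : cl sv t = sv := cl_of_ge (le_of_lt hsv) h1
    have e2 : cl su t = t := cl_of_mem (le_of_lt ht0) h2
    have e3 : cl su (t - sv - S) = (t - sv - S) := cl_of_mem (by linarith) (by linarith)
    have e4 : cl sv (t - su - S) = (t - su - S) := cl_of_mem (by linarith) (by linarith)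
    have e5 : cl S (t - sv) = S := cl_of_ge hS (by linarith)
    have e6 : cl S (t - su) = 0 := cl_of_nonpos hS (by linarith)
    rw [e1, e2, e3, e4, e5, e6, abs_lt]
    constructor <;> nlinarith
  · have e1 : cl sv t = sv := cl_of_ge (le_of_lt hsv) h1
    have e2 : cl su t = su := cl_of_ge (le_of_lt hsu) h2
    have e3 : cl su (t - sv - S) = 0 := cl_of_nonpos (le_of_lt hsu) (by linarith)
    have e4 : cl sv (t - su - S) = 0 := cl_of_nonpos (le_of_lt hsv) (by linarith)
    have e5 : cl S (t - sv) = (t - sv) := cl_of_mem (by linarith) (by linarith)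
    have e6 : cl S (t - su) = (t - su) := cl_of_mem (by linarith) (by linarith)
    rw [e1, e2, e3, e4, e5, e6, abs_lt]
    constructor <;> nlinarith
  · have e1 : cl sv t = sv := cl_of_ge (le_of_lt hsv) h1
    have e2 : cl su t = su := cl_of_ge (le_of_lt hsu) h2
    have e3 : cl su (t - sv - S) = 0 := cl_of_nonpos (le_of_lt hsu) (by linarith)
    have e4 : cl sv (t - su - S) = (t - su - S) := cl_of_mem (by linarith) (by linarith)
    have e5 : cl S (t - sv) = (t - sv) := cl_of_mem (by linarith) (by linarith)
    have e6 : cl S (t - su) = S := cl_of_ge hS (by linarith)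
    rw [e1, e2, e3, e4, e5, e6, abs_lt]
    constructor <;> nlinarith
  · have e1 : cl sv t = sv := cl_of_ge (le_of_lt hsv) h1
    have e2 : cl su t = su := cl_of_ge (le_of_lt hsu) h2
    have e3 : cl su (t - sv - S) = (t - sv - S) := cl_of_mem (by linarith) (by linarith)
    have e4 : cl sv (t - su - S) = 0 := cl_of_nonpos (le_of_lt hsv) (by linarith)
    have e5 : cl S (t - sv) = S := cl_of_ge hS (by linarith)
    have e6 : cl S (t - su) = (t - su) := cl_of_mem (by linarith) (by linarith)
    rw [e1, e2, e3, e4, e5, e6, abs_lt]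
    constructor <;> nlinarith
  · have e1 : cl sv t = sv := cl_of_ge (le_of_lt hsv) h1
    have e2 : cl su t = su := cl_of_ge (le_of_lt hsu) h2
    have e3 : cl su (t - sv - S) = (t - sv - S) := cl_of_mem (by linarith) (by linarith)
    have e4 : cl sv (t - su - S) = (t - su - S) := cl_of_mem (by linarith) (by linarith)
    have e5 : cl S (t - sv) = S := cl_of_ge hS (by linarith)
    have e6 : cl S (t - su) = S := cl_of_ge hS (by linarith)
    rw [e1, e2, e3, e4, e5, e6, abs_lt]
    constructor <;> nlinarith

noncomputable def Ed (n : ℕ) (u : Equiv.Perm (Fin n)) : ℕ → ℝ × ℝ :=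
  fun i => if h : i < n then beta n (Real.pi/4) ((u⁻¹ ⟨i, h⟩).val + 1) else (0,1)

noncomputable def Yd (n : ℕ) (u : Equiv.Perm (Fin n)) : ℕ → ℝ :=
  fun c => ∑ j ∈ Finset.range c, (Ed n u j).2

noncomputable def Fd (n : ℕ) (u : Equiv.Perm (Fin n)) : ℝ → ℝ :=
  fun y => ∑ i ∈ Finset.range n,
    ((Ed n u i).1 / (Ed n u i).2) * cl (Ed n u i).2 (y - Yd n u i)

noncomputable def ang (n k : ℕ) : ℝ :=
  ((k : ℝ) - 1) * (Real.pi - 2 * (Real.pi/4)) / ((n : ℝ) - 1) + Real.pi/4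

lemma beta_eq (n k : ℕ) : beta n (Real.pi/4) k = (-Real.cos (ang n k), Real.sin (ang n k)) := rfl

section EdFacts
variable {n : ℕ} (u : Equiv.Perm (Fin n))

lemma Ed_lt {i : ℕ} (h : i < n) :
    Ed n u i = beta n (Real.pi/4) ((u⁻¹ ⟨i, h⟩).val + 1) := dif_pos h

lemma vert_eq {c : ℕ} (hc : c ≤ n) :
    vert n (Real.pi/4) u c = ∑ i ∈ Finset.range c, Ed n u i := by
  induction c with
  | zero =>
      rw [vert]
      simp
  | succ c ih =>
      have hcn : c < n := hc
      have hset : Finset.univ.filter (fun i : Fin n => (i : ℕ) < c + 1)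
          = insert (⟨c, hcn⟩ : Fin n) (Finset.univ.filter (fun i : Fin n => (i : ℕ) < c)) := by
        ext i
        simp only [Finset.mem_filter, Finset.mem_univ, true_and, Finset.mem_insert, Fin.ext_iff]
        omega
      rw [vert, hset, Finset.sum_insert (by simp), Finset.sum_range_succ, ← vert,
        ih (le_of_lt hcn), Ed_lt u hcn]
      ring
end EdFacts

section EdFacts2
variable {n : ℕ} (u : Equiv.Perm (Fin n))

lemma ang_mem' (hn : 2 ≤ n) {k : ℕ} (hk1 : 1 ≤ k) (hkn : k ≤ n) :
    π/4 ≤ ang n k ∧ ang n k ≤ 3*π/4 := by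
  have hN : (0:ℝ) < (n:ℝ) - 1 := by
    have : (2:ℝ) ≤ (n:ℝ) := by exact_mod_cast hn
    linarith
  have hk1' : (1:ℝ) ≤ (k:ℝ) := by exact_mod_cast hk1
  have hkn' : (k:ℝ) ≤ (n:ℝ) := by exact_mod_cast hkn
  unfold ang
  constructor
  · have : 0 ≤ ((k:ℝ) - 1) * (Real.pi - 2 * (Real.pi/4)) / ((n : ℝ) - 1) :=
      div_nonneg (mul_nonneg (by linarith) (by linarith [pi_pos])) hN.le
    linarith
  · rw [div_add' _ _ _ hN.ne', div_le_iff₀ hN]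
    nlinarith [pi_pos]

lemma Ed_snd_pos (hn : 2 ≤ n) : ∀ i, 0 < (Ed n u i).2 := by
  intro i
  unfold Ed
  split
  · next h =>
      rw [beta_eq]
      obtain ⟨h1, h2⟩ := ang_mem' (n := n) (k := (u⁻¹ ⟨i, h⟩).val + 1) hn
        (Nat.le_add_left 1 _) (Nat.succ_le_of_lt (Fin.is_lt _))
      exact Real.sin_pos_of_pos_of_lt_pi (by linarith [pi_pos]) (by linarith [pi_pos])
  · norm_num

lemma Ed_lip (hn : 2 ≤ n) : ∀ i, -(Ed n u i).2 ≤ (Ed n u i).1 ∧ (Ed n u i).1 ≤ (Ed n u i).2 := by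
  intro i
  unfold Ed
  split
  · next h =>
      rw [beta_eq]
      obtain ⟨h1, h2⟩ := ang_mem' (n := n) (k := (u⁻¹ ⟨i, h⟩).val + 1) hn
        (Nat.le_add_left 1 _) (Nat.succ_le_of_lt (Fin.is_lt _))
      set x := ang n ((u⁻¹ ⟨i, h⟩).val + 1)
      constructor
      · -- -(sin x) ≤ -(cos x)  ⟺  cos x ≤ sin x
        have := Real.sin_nonneg_of_nonneg_of_le_pi (x := x - π/4) (by linarith) (by linarith [pi_pos])
        rw [Real.sin_sub, Real.cos_pi_div_four, Real.sin_pi_div_four] at this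
        have hs : (0:ℝ) < Real.sqrt 2 := Real.sqrt_pos.mpr (by norm_num)
        simp only
        nlinarith
      · have := Real.sin_nonneg_of_nonneg_of_le_pi (x := x + π/4) (by linarith [pi_pos]) (by linarith [pi_pos])
        rw [Real.sin_add, Real.cos_pi_div_four, Real.sin_pi_div_four] at this
        have hs : (0:ℝ) < Real.sqrt 2 := Real.sqrt_pos.mpr (by norm_num)
        simp only
        nlinarith
  · norm_num

lemma Yd_step (c : ℕ) : Yd n u (c+1) = Yd n u c + (Ed n u c).2 :=
  Finset.sum_range_succ _ c

lemma Yd_mono (hn : 2 ≤ n) {c d : ℕ} (h : c ≤ d) : Yd n u c ≤ Yd n u d :=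
  Finset.sum_le_sum_of_subset_of_nonneg (Finset.range_subset_range.2 h)
    (fun i _ _ => (Ed_snd_pos u hn i).le)

lemma Y_vert {c : ℕ} (hc : c ≤ n) : (vert n (Real.pi/4) u c).2 = Yd n u c := by
  rw [vert_eq u hc, Prod.snd_sum, Yd]
end EdFacts2

lemma point_eval {n : ℕ} (u : Equiv.Perm (Fin n)) (hn : 2 ≤ n) {i : ℕ} (hi : i < n)
    {p : ℝ × ℝ} (hp : p ∈ segment ℝ (vert n (Real.pi/4) u i) (vert n (Real.pi/4) u (i+1))) :
    p.1 = Fd n u p.2 := by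
  obtain ⟨av, bv, ha, hb, hab1, hpeq⟩ := hp
  have hv1 : vert n (Real.pi/4) u i = ∑ j ∈ Finset.range i, Ed n u j := vert_eq u hi.le
  have hv2 : vert n (Real.pi/4) u (i+1) = (∑ j ∈ Finset.range i, Ed n u j) + Ed n u i := by
    rw [vert_eq u hi, Finset.sum_range_succ]
  have hXi : (vert n (Real.pi/4) u i).1 = ∑ j ∈ Finset.range i, (Ed n u j).1 := by
    rw [hv1, Prod.fst_sum]
  have hYi : (vert n (Real.pi/4) u i).2 = Yd n u i := Y_vert u hi.le
  have hav : av = 1 - bv := by linarith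
  have hX2 : (vert n (Real.pi/4) u (i+1)).1 = (∑ j ∈ Finset.range i, (Ed n u j).1) + (Ed n u i).1 := by
    rw [hv2, Prod.fst_add, Prod.fst_sum]
  have hY2 : (vert n (Real.pi/4) u (i+1)).2 = Yd n u i + (Ed n u i).2 := by
    rw [hv2, Prod.snd_add, Prod.snd_sum, Yd]
  have hYi' : (vert n (Real.pi/4) u i).2 = Yd n u i := hYi
  have hp1 : p.1 = (∑ j ∈ Finset.range i, (Ed n u j).1) + bv * (Ed n u i).1 := by
    have h := congrArg Prod.fst hpeq
    simp only [Prod.fst_add, Prod.smul_fst, smul_eq_mul] at h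
    rw [← h, hXi, hX2, hav]; ring
  have hp2 : p.2 = Yd n u i + bv * (Ed n u i).2 := by
    have h := congrArg Prod.snd hpeq
    simp only [Prod.snd_add, Prod.smul_snd, smul_eq_mul] at h
    rw [← h, hYi', hY2, hav]; ring
  have hbv1 : bv ≤ 1 := by linarith
  have hsi := Ed_snd_pos u hn
  have key : ∀ j ∈ Finset.range n,
      ((Ed n u j).1 / (Ed n u j).2) * cl (Ed n u j).2 (p.2 - Yd n u j)
        = (if j < i then (Ed n u j).1 else if j = i then bv * (Ed n u i).1 else 0) := by
    intro j hj
    rcases lt_trichotomy j i with hji | hji | hji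
    · have h1 : Yd n u (j+1) ≤ Yd n u i := Yd_mono u hn hji
      have h2 : (Ed n u j).2 ≤ p.2 - Yd n u j := by
        have := Yd_step u j
        nlinarith [hsi i, hp2]
      rw [cl_of_ge (hsi j).le h2, div_mul_cancel₀ _ (hsi j).ne', if_pos hji]
    · subst hji
      have h2 : cl (Ed n u j).2 (p.2 - Yd n u j) = bv * (Ed n u j).2 := by
        rw [hp2]
        have := hsi j
        rw [show Yd n u j + bv * (Ed n u j).2 - Yd n u j = bv * (Ed n u j).2 by ring]
        exact cl_of_mem (by positivity) (by nlinarith)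
      rw [h2, if_neg (lt_irrefl j), if_pos rfl]
      have hne : (Ed n u j).2 ≠ 0 := (hsi j).ne'
      field_simp
    · have h1 : Yd n u (i+1) ≤ Yd n u j := Yd_mono u hn hji
      have h2 : p.2 - Yd n u j ≤ 0 := by
        have := Yd_step u i
        nlinarith [hsi i, hp2]
      rw [cl_of_nonpos (hsi j).le h2, mul_zero, if_neg (by omega), if_neg (by omega)]
  rw [Fd]
  rw [Finset.sum_congr rfl key]
  rw [show Finset.range n = Finset.Ico 0 n from Finset.range_eq_Ico n,
    ← Finset.sum_Ico_consecutive _ (Nat.zero_le (i+1)) (Nat.succ_le_of_lt hi),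
    ← Finset.range_eq_Ico, Finset.sum_range_succ]
  have e1 : ∑ j ∈ Finset.range i, (if j < i then (Ed n u j).1 else if j = i then bv * (Ed n u i).1 else 0)
      = ∑ j ∈ Finset.range i, (Ed n u j).1 := by
    apply Finset.sum_congr rfl
    intro j hj
    rw [if_pos (Finset.mem_range.1 hj)]
  have e2 : ∑ j ∈ Finset.Ico (i+1) n, (if j < i then (Ed n u j).1 else if j = i then bv * (Ed n u i).1 else 0) = 0 := by
    apply Finset.sum_eq_zero
    intro j hj
    have := (Finset.mem_Ico.1 hj).1
    rw [if_neg (by omega), if_neg (by omega)]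
  rw [e1, e2, if_neg (lt_irrefl i), if_pos rfl, hp1]
  ring

lemma border_eval {n : ℕ} (u : Equiv.Perm (Fin n)) (hn : 2 ≤ n)
    {p : ℝ × ℝ} (hp : p ∈ border n (Real.pi/4) u) : p.1 = Fd n u p.2 := by
  rw [border, Set.mem_iUnion] at hp
  obtain ⟨i, hp⟩ := hp
  rw [Set.mem_iUnion] at hp
  obtain ⟨hi, hp⟩ := hp
  exact point_eval u hn (Finset.mem_range.1 hi) hp

lemma ang_lt {n k k' : ℕ} (hn : 2 ≤ n) (hk1 : 1 ≤ k) (h : k < k') (h2 : k' ≤ n) :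
    ang n k < ang n k' := by
  have hN : (0:ℝ) < (n:ℝ) - 1 := by
    have : (2:ℝ) ≤ (n:ℝ) := by exact_mod_cast hn
    linarith
  have hkk : (k:ℝ) < (k':ℝ) := by exact_mod_cast h
  unfold ang
  have hp : (0:ℝ) < Real.pi - 2 * (Real.pi/4) := by linarith [pi_pos]
  have h1 : ((k:ℝ) - 1) * (Real.pi - 2 * (Real.pi/4)) < ((k':ℝ) - 1) * (Real.pi - 2 * (Real.pi/4)) := by
    nlinarith
  have := div_lt_div_of_pos_right h1 hN
  linarith



lemma trig_sin_pos {x : ℝ} (h1 : π/4 ≤ x) (h2 : x ≤ 3*π/4) : 0 < Real.sin x :=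
  Real.sin_pos_of_pos_of_lt_pi (by linarith [pi_pos]) (by linarith [pi_pos])

lemma trig_cos_le {x : ℝ} (h1 : π/4 ≤ x) (h2 : x ≤ 3*π/4) : Real.cos x ≤ Real.sin x := by
  have h := Real.sin_nonneg_of_nonneg_of_le_pi (x := x - π/4) (by linarith) (by linarith [pi_pos])
  rw [Real.sin_sub, Real.cos_pi_div_four, Real.sin_pi_div_four] at h
  have h2 : (0:ℝ) < Real.sqrt 2 := Real.sqrt_pos.mpr (by norm_num)
  nlinarith

lemma trig_neg_cos_le {x : ℝ} (h1 : π/4 ≤ x) (h2 : x ≤ 3*π/4) : -Real.cos x ≤ Real.sin x := by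
  have h := Real.sin_nonneg_of_nonneg_of_le_pi (x := x + π/4) (by linarith [pi_pos]) (by linarith [pi_pos])
  rw [Real.sin_add, Real.cos_pi_div_four, Real.sin_pi_div_four] at h
  have h2 : (0:ℝ) < Real.sqrt 2 := Real.sqrt_pos.mpr (by norm_num)
  nlinarith

lemma trig_K1 {x y : ℝ} (h1 : π/4 ≤ x) (hxy : x < y) (h2 : y ≤ 3*π/4) :
    Real.cos y + Real.sin y < Real.cos x + Real.sin x := by
  have h := Real.cos_lt_cos_of_nonneg_of_le_pi (x := x - π/4) (y := y - π/4)
    (by linarith) (by linarith [pi_pos]) (by linarith)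
  rw [Real.cos_sub, Real.cos_sub, Real.cos_pi_div_four, Real.sin_pi_div_four] at h
  have h2 : (0:ℝ) < Real.sqrt 2 := Real.sqrt_pos.mpr (by norm_num)
  nlinarith

lemma trig_K2 {x y : ℝ} (h1 : π/4 ≤ x) (hxy : x < y) (h2 : y ≤ 3*π/4) :
    Real.cos y - Real.sin y < Real.cos x - Real.sin x := by
  have h := Real.cos_lt_cos_of_nonneg_of_le_pi (x := x + π/4) (y := y + π/4)
    (by linarith [pi_pos]) (by linarith [pi_pos]) (by linarith)
  rw [Real.cos_add, Real.cos_add, Real.cos_pi_div_four, Real.sin_pi_div_four] at h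
  have h2 : (0:ℝ) < Real.sqrt 2 := Real.sqrt_pos.mpr (by norm_num)
  nlinarith

lemma trig_cross {x y : ℝ} (h1 : π/4 ≤ x) (hxy : x < y) (h2 : y ≤ 3*π/4) :
    Real.cos y * Real.sin x < Real.cos x * Real.sin y := by
  have h := Real.sin_pos_of_pos_of_lt_pi (x := y - x) (by linarith) (by linarith [pi_pos])
  rw [Real.sin_sub] at h
  nlinarith

lemma cl_nonneg' {s x : ℝ} (hs : 0 ≤ s) : 0 ≤ cl s x := le_min (le_max_right x 0) hs

lemma Fd_compare {n : ℕ} (hn : 2 ≤ n) (w wt : Equiv.Perm (Fin n)) (A B : ℕ)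
    (hAB : A < B) (hBn : B < n)
    (hEa : Ed n wt A = Ed n w B) (hEb : Ed n wt B = Ed n w A)
    (hEo : ∀ j, j ≠ A → j ≠ B → Ed n wt j = Ed n w j)
    (hm : (Ed n w A).1 / (Ed n w A).2 < (Ed n w B).1 / (Ed n w B).2)
    (hK1 : (Ed n w B).2 - (Ed n w A).2 < (Ed n w B).1 - (Ed n w A).1)
    (hK2 : (Ed n w A).2 - (Ed n w B).2 < (Ed n w B).1 - (Ed n w A).1)
    (y : ℝ) :
    (y ≤ Yd n w A ∨ Yd n w (B+1) ≤ y → Fd n wt y = Fd n w y) ∧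
    (Yd n w A < y → y < Yd n w (B+1) → Fd n w y < Fd n wt y) := by
  have hsi := Ed_snd_pos w hn
  have hlip := Ed_lip w hn
  have hsv : 0 < (Ed n w A).2 := hsi A
  have hsu : 0 < (Ed n w B).2 := hsi B
  have hS0 : 0 ≤ ∑ j ∈ Finset.Ico (A+1) B, (Ed n w j).2 :=
    Finset.sum_nonneg fun j _ => (hsi j).le
  have hσ0 : ∀ j, 0 ≤ ∑ k ∈ Finset.Ico (A+1) j, (Ed n w k).2 :=
    fun j => Finset.sum_nonneg fun k _ => (hsi k).le
  have hmall : ∀ j, -1 ≤ (Ed n w j).1/(Ed n w j).2 ∧ (Ed n w j).1/(Ed n w j).2 ≤ 1 := by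
    intro j
    constructor
    · rw [le_div_iff₀ (hsi j)]; linarith [(hlip j).1]
    · rw [div_le_one (hsi j)]; exact (hlip j).2
  have hYb : Yd n w B = Yd n w A + (Ed n w A).2 + ∑ j ∈ Finset.Ico (A+1) B, (Ed n w j).2 := by
    simp only [Yd]
    rw [sum_split_at (fun k => (Ed n w k).2) (show A+1 ≤ B by omega), Finset.sum_range_succ]
  have hYB1 : Yd n w (B+1) = Yd n w A + (Ed n w A).2
      + (∑ j ∈ Finset.Ico (A+1) B, (Ed n w j).2) + (Ed n w B).2 := by
    rw [Yd_step, hYb]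
  have hσ : ∀ j, A < j → j ≤ B → Yd n w j
      = Yd n w A + (Ed n w A).2 + ∑ k ∈ Finset.Ico (A+1) j, (Ed n w k).2 := by
    intro j h1 h2
    simp only [Yd]
    rw [sum_split_at (fun k => (Ed n w k).2) (show A+1 ≤ j by omega), Finset.sum_range_succ]
  have hσS : ∀ j, A < j → j < B →
      (∑ k ∈ Finset.Ico (A+1) j, (Ed n w k).2) + (Ed n w j).2
        ≤ ∑ k ∈ Finset.Ico (A+1) B, (Ed n w k).2 := by
    intro j h1 h2
    rw [← Finset.sum_Ico_succ_top (show A+1 ≤ j by omega)]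
    exact Finset.sum_le_sum_of_subset_of_nonneg
      (Finset.Ico_subset_Ico le_rfl (by omega)) (fun k _ _ => (hsi k).le)
  have hYrel : ∀ c, Yd n wt c = Yd n w c
      + (if A < c then (Ed n w B).2 - (Ed n w A).2 else 0)
      + (if B < c then (Ed n w A).2 - (Ed n w B).2 else 0) := by
    intro c
    induction c with
    | zero => simp [Yd]
    | succ c ih =>
        rw [Yd_step, Yd_step, ih]
        by_cases hca : c = A
        · subst hca; rw [hEa]; split_ifs <;> (first | ring1 | (exfalso; omega))
        · by_cases hcb : c = B
          · subst hcb; rw [hEb]; split_ifs <;> (first | ring1 | (exfalso; omega))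
          · rw [hEo c hca hcb]; split_ifs <;> (first | ring1 | (exfalso; omega))
  have hYwtlow : ∀ c, c ≤ A → Yd n wt c = Yd n w c := by
    intro c hc
    rw [hYrel, if_neg (by omega), if_neg (by omega)]; ring
  have hYwtmid : ∀ c, A < c → c ≤ B →
      Yd n wt c = Yd n w c + ((Ed n w B).2 - (Ed n w A).2) := by
    intro c h1 h2
    rw [hYrel, if_pos h1, if_neg (by omega)]; ring
  have hYwthigh : ∀ c, B < c → Yd n wt c = Yd n w c := by
    intro c hc
    rw [hYrel, if_pos (by omega), if_pos hc]; ring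
  have hdec : ∀ z : ℝ, Fd n wt z - Fd n w z =
      ((Ed n w B).1/(Ed n w B).2 * cl (Ed n w B).2 (z - Yd n w A)
        - (Ed n w A).1/(Ed n w A).2 * cl (Ed n w A).2 (z - Yd n w A))
    + (∑ j ∈ Finset.Ico (A+1) B, (Ed n w j).1/(Ed n w j).2 *
          (cl (Ed n w j).2 (z - Yd n w A - (Ed n w B).2 - ∑ k ∈ Finset.Ico (A+1) j, (Ed n w k).2)
         - cl (Ed n w j).2 (z - Yd n w A - (Ed n w A).2 - ∑ k ∈ Finset.Ico (A+1) j, (Ed n w k).2)))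
    + ((Ed n w A).1/(Ed n w A).2 * cl (Ed n w A).2
          (z - Yd n w A - (Ed n w B).2 - ∑ k ∈ Finset.Ico (A+1) B, (Ed n w k).2)
        - (Ed n w B).1/(Ed n w B).2 * cl (Ed n w B).2
          (z - Yd n w A - (Ed n w A).2 - ∑ k ∈ Finset.Ico (A+1) B, (Ed n w k).2)) := by
    intro z
    simp only [Fd]
    rw [← Finset.sum_sub_distrib, sum_split5 _ hAB hBn]
    have hz1 : ∑ j ∈ Finset.range A,
        ((Ed n wt j).1 / (Ed n wt j).2 * cl (Ed n wt j).2 (z - Yd n wt j)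
          - (Ed n w j).1 / (Ed n w j).2 * cl (Ed n w j).2 (z - Yd n w j)) = 0 := by
      apply Finset.sum_eq_zero
      intro j hj
      have hjA : j < A := Finset.mem_range.1 hj
      rw [hEo j (by omega) (by omega), hYwtlow j (by omega)]; ring
    have hz2 : ∑ j ∈ Finset.Ico (B+1) n,
        ((Ed n wt j).1 / (Ed n wt j).2 * cl (Ed n wt j).2 (z - Yd n wt j)
          - (Ed n w j).1 / (Ed n w j).2 * cl (Ed n w j).2 (z - Yd n w j)) = 0 := by
      apply Finset.sum_eq_zero
      intro j hj
      have hjB : B + 1 ≤ j := (Finset.mem_Ico.1 hj).1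
      rw [hEo j (by omega) (by omega), hYwthigh j (by omega)]; ring
    have hmidc : ∑ j ∈ Finset.Ico (A+1) B,
        ((Ed n wt j).1 / (Ed n wt j).2 * cl (Ed n wt j).2 (z - Yd n wt j)
          - (Ed n w j).1 / (Ed n w j).2 * cl (Ed n w j).2 (z - Yd n w j))
      = ∑ j ∈ Finset.Ico (A+1) B, (Ed n w j).1/(Ed n w j).2 *
          (cl (Ed n w j).2 (z - Yd n w A - (Ed n w B).2 - ∑ k ∈ Finset.Ico (A+1) j, (Ed n w k).2)
         - cl (Ed n w j).2 (z - Yd n w A - (Ed n w A).2 - ∑ k ∈ Finset.Ico (A+1) j, (Ed n w k).2)) := by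
      apply Finset.sum_congr rfl
      intro j hj
      obtain ⟨hj1, hj2⟩ := Finset.mem_Ico.1 hj
      rw [hEo j (by omega) (by omega), hYwtmid j (by omega) (by omega), hσ j (by omega) (by omega),
        show z - (Yd n w A + (Ed n w A).2 + (∑ k ∈ Finset.Ico (A+1) j, (Ed n w k).2)
            + ((Ed n w B).2 - (Ed n w A).2))
          = z - Yd n w A - (Ed n w B).2 - ∑ k ∈ Finset.Ico (A+1) j, (Ed n w k).2 from by ring,
        show z - (Yd n w A + (Ed n w A).2 + (∑ k ∈ Finset.Ico (A+1) j, (Ed n w k).2))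
          = z - Yd n w A - (Ed n w A).2 - ∑ k ∈ Finset.Ico (A+1) j, (Ed n w k).2 from by ring]
      ring
    have hma : Yd n wt A = Yd n w A := hYwtlow A le_rfl
    have hmb : Yd n wt B = Yd n w A + (Ed n w B).2 + ∑ k ∈ Finset.Ico (A+1) B, (Ed n w k).2 := by
      rw [hYwtmid B (by omega) le_rfl, hYb]; ring
    rw [hz1, hz2, hmidc, hEa, hEb, hma, hmb, hYb,
      show z - (Yd n w A + (Ed n w B).2 + ∑ k ∈ Finset.Ico (A+1) B, (Ed n w k).2)
        = z - Yd n w A - (Ed n w B).2 - ∑ k ∈ Finset.Ico (A+1) B, (Ed n w k).2 from by ring,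
      show z - (Yd n w A + (Ed n w A).2 + ∑ k ∈ Finset.Ico (A+1) B, (Ed n w k).2)
        = z - Yd n w A - (Ed n w A).2 - ∑ k ∈ Finset.Ico (A+1) B, (Ed n w k).2 from by ring]
    ring
  constructor
  · rintro (hy | hy)
    · rw [← sub_eq_zero, hdec y]
      have c1 : cl (Ed n w B).2 (y - Yd n w A) = 0 := cl_of_nonpos hsu.le (by linarith)
      have c2 : cl (Ed n w A).2 (y - Yd n w A) = 0 := cl_of_nonpos hsv.le (by linarith)
      have c3 : cl (Ed n w A).2 (y - Yd n w A - (Ed n w B).2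
          - ∑ k ∈ Finset.Ico (A+1) B, (Ed n w k).2) = 0 :=
        cl_of_nonpos hsv.le (by linarith)
      have c4 : cl (Ed n w B).2 (y - Yd n w A - (Ed n w A).2
          - ∑ k ∈ Finset.Ico (A+1) B, (Ed n w k).2) = 0 :=
        cl_of_nonpos hsu.le (by linarith)
      have cm : ∑ j ∈ Finset.Ico (A+1) B, (Ed n w j).1/(Ed n w j).2 *
          (cl (Ed n w j).2 (y - Yd n w A - (Ed n w B).2 - ∑ k ∈ Finset.Ico (A+1) j, (Ed n w k).2)
         - cl (Ed n w j).2 (y - Yd n w A - (Ed n w A).2 - ∑ k ∈ Finset.Ico (A+1) j, (Ed n w k).2)) = 0 := by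
        apply Finset.sum_eq_zero
        intro j hj
        rw [cl_of_nonpos (hsi j).le (by linarith [hσ0 j]),
          cl_of_nonpos (hsi j).le (by linarith [hσ0 j])]
        ring
      rw [c1, c2, c3, c4, cm]; ring
    · rw [← sub_eq_zero, hdec y]
      rw [hYB1] at hy
      have c1 : cl (Ed n w B).2 (y - Yd n w A) = (Ed n w B).2 :=
        cl_of_ge hsu.le (by linarith)
      have c2 : cl (Ed n w A).2 (y - Yd n w A) = (Ed n w A).2 :=
        cl_of_ge hsv.le (by linarith)
      have c3 : cl (Ed n w A).2 (y - Yd n w A - (Ed n w B).2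
          - ∑ k ∈ Finset.Ico (A+1) B, (Ed n w k).2) = (Ed n w A).2 :=
        cl_of_ge hsv.le (by linarith)
      have c4 : cl (Ed n w B).2 (y - Yd n w A - (Ed n w A).2
          - ∑ k ∈ Finset.Ico (A+1) B, (Ed n w k).2) = (Ed n w B).2 :=
        cl_of_ge hsu.le (by linarith)
      have cm : ∑ j ∈ Finset.Ico (A+1) B, (Ed n w j).1/(Ed n w j).2 *
          (cl (Ed n w j).2 (y - Yd n w A - (Ed n w B).2 - ∑ k ∈ Finset.Ico (A+1) j, (Ed n w k).2)
         - cl (Ed n w j).2 (y - Yd n w A - (Ed n w A).2 - ∑ k ∈ Finset.Ico (A+1) j, (Ed n w k).2)) = 0 := by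
        apply Finset.sum_eq_zero
        intro j hj
        obtain ⟨hj1, hj2⟩ := Finset.mem_Ico.1 hj
        have hss := hσS j (by omega) (by omega)
        rw [cl_of_ge (hsi j).le (by linarith),
          cl_of_ge (hsi j).le (by linarith)]
        ring
      rw [c1, c2, c3, c4, cm]; ring
  · intro h1 h2
    rw [← sub_pos, hdec y]
    rw [hYB1] at h2
    have hK1' : (Ed n w B).2 - (Ed n w A).2
        < (Ed n w B).1/(Ed n w B).2 * (Ed n w B).2
          - (Ed n w A).1/(Ed n w A).2 * (Ed n w A).2 := by
      rw [div_mul_cancel₀ _ hsu.ne', div_mul_cancel₀ _ hsv.ne']; exact hK1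
    have hK2' : (Ed n w A).2 - (Ed n w B).2
        < (Ed n w B).1/(Ed n w B).2 * (Ed n w B).2
          - (Ed n w A).1/(Ed n w A).2 * (Ed n w A).2 := by
      rw [div_mul_cancel₀ _ hsu.ne', div_mul_cancel₀ _ hsv.ne']; exact hK2
    have hcore := core ((Ed n w A).1/(Ed n w A).2) ((Ed n w B).1/(Ed n w B).2)
      (Ed n w A).2 (Ed n w B).2 (∑ j ∈ Finset.Ico (A+1) B, (Ed n w j).2) (y - Yd n w A)
      hsv hsu hS0 (hmall A).1 (hmall A).2 (hmall B).1 (hmall B).2 hm hK1' hK2'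
      (by linarith) (by linarith)
    have htele : ∀ x : ℝ, ∑ j ∈ Finset.Ico (A+1) B,
        cl ((Ed n w j).2) (x - ∑ k ∈ Finset.Ico (A+1) j, (Ed n w k).2)
          = cl (∑ j ∈ Finset.Ico (A+1) B, (Ed n w j).2) x := by
      intro x
      have h := tele (fun k => (Ed n w k).2) (fun i => (hsi i).le) (A+1) (B - (A+1)) x
      rw [show A+1 + (B - (A+1)) = B by omega] at h
      exact h
    have hmid : -(|cl (∑ j ∈ Finset.Ico (A+1) B, (Ed n w j).2) (y - Yd n w A - (Ed n w A).2)
          - cl (∑ j ∈ Finset.Ico (A+1) B, (Ed n w j).2) (y - Yd n w A - (Ed n w B).2)|)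
        ≤ ∑ j ∈ Finset.Ico (A+1) B, (Ed n w j).1/(Ed n w j).2 *
          (cl (Ed n w j).2 (y - Yd n w A - (Ed n w B).2 - ∑ k ∈ Finset.Ico (A+1) j, (Ed n w k).2)
         - cl (Ed n w j).2 (y - Yd n w A - (Ed n w A).2 - ∑ k ∈ Finset.Ico (A+1) j, (Ed n w k).2)) := by
      rcases le_total (Ed n w A).2 (Ed n w B).2 with hc | hc
      · have habs : |cl (∑ j ∈ Finset.Ico (A+1) B, (Ed n w j).2) (y - Yd n w A - (Ed n w A).2)
            - cl (∑ j ∈ Finset.Ico (A+1) B, (Ed n w j).2) (y - Yd n w A - (Ed n w B).2)|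
            = cl (∑ j ∈ Finset.Ico (A+1) B, (Ed n w j).2) (y - Yd n w A - (Ed n w A).2)
            - cl (∑ j ∈ Finset.Ico (A+1) B, (Ed n w j).2) (y - Yd n w A - (Ed n w B).2) :=
          abs_of_nonneg (by
            have := cl_mono (s := ∑ j ∈ Finset.Ico (A+1) B, (Ed n w j).2)
              (show y - Yd n w A - (Ed n w B).2 ≤ y - Yd n w A - (Ed n w A).2 by linarith)
            linarith)
        rw [habs]
        have hterm : ∀ j ∈ Finset.Ico (A+1) B,
            (cl (Ed n w j).2 (y - Yd n w A - (Ed n w B).2 - ∑ k ∈ Finset.Ico (A+1) j, (Ed n w k).2)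
             - cl (Ed n w j).2 (y - Yd n w A - (Ed n w A).2 - ∑ k ∈ Finset.Ico (A+1) j, (Ed n w k).2))
            ≤ (Ed n w j).1/(Ed n w j).2 *
            (cl (Ed n w j).2 (y - Yd n w A - (Ed n w B).2 - ∑ k ∈ Finset.Ico (A+1) j, (Ed n w k).2)
             - cl (Ed n w j).2 (y - Yd n w A - (Ed n w A).2 - ∑ k ∈ Finset.Ico (A+1) j, (Ed n w k).2)) := by
          intro j hj
          have hd := cl_mono (s := (Ed n w j).2)
            (show y - Yd n w A - (Ed n w B).2 - (∑ k ∈ Finset.Ico (A+1) j, (Ed n w k).2)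
              ≤ y - Yd n w A - (Ed n w A).2 - (∑ k ∈ Finset.Ico (A+1) j, (Ed n w k).2) by linarith)
          nlinarith [(hmall j).2]
        have hsum := Finset.sum_le_sum hterm
        rw [Finset.sum_sub_distrib, htele, htele] at hsum
        linarith
      · have habs : |cl (∑ j ∈ Finset.Ico (A+1) B, (Ed n w j).2) (y - Yd n w A - (Ed n w A).2)
            - cl (∑ j ∈ Finset.Ico (A+1) B, (Ed n w j).2) (y - Yd n w A - (Ed n w B).2)|
            = -(cl (∑ j ∈ Finset.Ico (A+1) B, (Ed n w j).2) (y - Yd n w A - (Ed n w A).2)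
            - cl (∑ j ∈ Finset.Ico (A+1) B, (Ed n w j).2) (y - Yd n w A - (Ed n w B).2)) :=
          abs_of_nonpos (by
            have := cl_mono (s := ∑ j ∈ Finset.Ico (A+1) B, (Ed n w j).2)
              (show y - Yd n w A - (Ed n w A).2 ≤ y - Yd n w A - (Ed n w B).2 by linarith)
            linarith)
        rw [habs]
        have hterm : ∀ j ∈ Finset.Ico (A+1) B,
            -(cl (Ed n w j).2 (y - Yd n w A - (Ed n w B).2 - ∑ k ∈ Finset.Ico (A+1) j, (Ed n w k).2)
             - cl (Ed n w j).2 (y - Yd n w A - (Ed n w A).2 - ∑ k ∈ Finset.Ico (A+1) j, (Ed n w k).2))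
            ≤ (Ed n w j).1/(Ed n w j).2 *
            (cl (Ed n w j).2 (y - Yd n w A - (Ed n w B).2 - ∑ k ∈ Finset.Ico (A+1) j, (Ed n w k).2)
             - cl (Ed n w j).2 (y - Yd n w A - (Ed n w A).2 - ∑ k ∈ Finset.Ico (A+1) j, (Ed n w k).2)) := by
          intro j hj
          have hd := cl_mono (s := (Ed n w j).2)
            (show y - Yd n w A - (Ed n w A).2 - (∑ k ∈ Finset.Ico (A+1) j, (Ed n w k).2)
              ≤ y - Yd n w A - (Ed n w B).2 - (∑ k ∈ Finset.Ico (A+1) j, (Ed n w k).2) by linarith)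
          nlinarith [(hmall j).1]
        have hsum := Finset.sum_le_sum hterm
        rw [Finset.sum_neg_distrib, Finset.sum_sub_distrib, htele, htele] at hsum
        linarith
    linarith [hcore, hmid, abs_nonneg (cl (∑ j ∈ Finset.Ico (A+1) B, (Ed n w j).2) (y - Yd n w A - (Ed n w A).2)
          - cl (∑ j ∈ Finset.Ico (A+1) B, (Ed n w j).2) (y - Yd n w A - (Ed n w B).2))]

/-- single covering step, α = π/4: B_n(w) ≺ B_n(wt), with strict inequality
exactly at heights strictly between Σ_{i=1}^{a-1} sin θ_{w⁻¹(i)} and Σ_{i=1}^{b} sin θ_{w⁻¹(i)}. -/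
theorem covering_step_precedes {n : ℕ} (hn : 2 ≤ n) (w : Equiv.Perm (Fin n)) (a b : Fin n)
    (hab : a < b) (hw : w⁻¹ a < w⁻¹ b)
    (hl : invLen (Equiv.swap a b * w) = invLen w + 1) :
    ∀ p ∈ border n (Real.pi / 4) w, ∀ q ∈ border n (Real.pi / 4) (Equiv.swap a b * w),
      p.2 = q.2 →
        (p.1 ≤ q.1 ∧
          (p.1 < q.1 ↔
            (vert n (Real.pi / 4) w (a : ℕ)).2 < p.2 ∧
              p.2 < (vert n (Real.pi / 4) w ((b : ℕ) + 1)).2)) := by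
  intro p hp q hq hpq
  have han : (a:ℕ) < n := a.isLt
  have hbn : (b:ℕ) < n := b.isLt
  have hab' : (a:ℕ) < (b:ℕ) := hab
  have hwtinv : ∀ (j : ℕ) (h : j < n),
      (Equiv.swap a b * w)⁻¹ ⟨j,h⟩ = w⁻¹ (Equiv.swap a b ⟨j,h⟩) := by
    intro j h
    rw [mul_inv_rev, Equiv.swap_inv, Equiv.Perm.mul_apply]
  have hEa : Ed n (Equiv.swap a b * w) (a:ℕ) = Ed n w (b:ℕ) := by
    rw [Ed_lt _ han, Ed_lt _ hbn, hwtinv (a:ℕ) han,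
      show (⟨(a:ℕ), han⟩ : Fin n) = a from rfl, Equiv.swap_apply_left,
      show (⟨(b:ℕ), hbn⟩ : Fin n) = b from rfl]
  have hEb : Ed n (Equiv.swap a b * w) (b:ℕ) = Ed n w (a:ℕ) := by
    rw [Ed_lt _ hbn, Ed_lt _ han, hwtinv (b:ℕ) hbn,
      show (⟨(b:ℕ), hbn⟩ : Fin n) = b from rfl, Equiv.swap_apply_right,
      show (⟨(a:ℕ), han⟩ : Fin n) = a from rfl]
  have hEo : ∀ j, j ≠ (a:ℕ) → j ≠ (b:ℕ) → Ed n (Equiv.swap a b * w) j = Ed n w j := by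
    intro j hja hjb
    by_cases h : j < n
    · rw [Ed_lt _ h, Ed_lt _ h, hwtinv j h,
        Equiv.swap_apply_of_ne_of_ne (fun hh => hja (congrArg Fin.val hh))
          (fun hh => hjb (congrArg Fin.val hh))]
    · simp [Ed, h]
  have hka1 : ((w⁻¹ a : Fin n) : ℕ) < ((w⁻¹ b : Fin n) : ℕ) := hw
  have hva : Ed n w (a:ℕ)
      = (-Real.cos (ang n (((w⁻¹ a : Fin n):ℕ)+1)), Real.sin (ang n (((w⁻¹ a : Fin n):ℕ)+1))) := by
    rw [Ed_lt w han, show (⟨(a:ℕ), han⟩ : Fin n) = a from rfl, beta_eq]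
  have hvb : Ed n w (b:ℕ)
      = (-Real.cos (ang n (((w⁻¹ b : Fin n):ℕ)+1)), Real.sin (ang n (((w⁻¹ b : Fin n):ℕ)+1))) := by
    rw [Ed_lt w hbn, show (⟨(b:ℕ), hbn⟩ : Fin n) = b from rfl, beta_eq]
  have hva1 : (Ed n w (a:ℕ)).1 = -Real.cos (ang n (((w⁻¹ a : Fin n):ℕ)+1)) := by rw [hva]
  have hva2 : (Ed n w (a:ℕ)).2 = Real.sin (ang n (((w⁻¹ a : Fin n):ℕ)+1)) := by rw [hva]
  have hvb1 : (Ed n w (b:ℕ)).1 = -Real.cos (ang n (((w⁻¹ b : Fin n):ℕ)+1)) := by rw [hvb]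
  have hvb2 : (Ed n w (b:ℕ)).2 = Real.sin (ang n (((w⁻¹ b : Fin n):ℕ)+1)) := by rw [hvb]
  have hxm := ang_mem' (n:=n) (k:=((w⁻¹ a : Fin n):ℕ)+1) hn (Nat.le_add_left 1 _)
    (Nat.succ_le_of_lt (w⁻¹ a).isLt)
  have hym := ang_mem' (n:=n) (k:=((w⁻¹ b : Fin n):ℕ)+1) hn (Nat.le_add_left 1 _)
    (Nat.succ_le_of_lt (w⁻¹ b).isLt)
  have hxy : ang n (((w⁻¹ a : Fin n):ℕ)+1) < ang n (((w⁻¹ b : Fin n):ℕ)+1) :=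
    ang_lt hn (Nat.le_add_left 1 _) (by omega) (Nat.succ_le_of_lt (w⁻¹ b).isLt)
  have hsva : 0 < (Ed n w (a:ℕ)).2 := Ed_snd_pos w hn _
  have hsub : 0 < (Ed n w (b:ℕ)).2 := Ed_snd_pos w hn _
  have hm : (Ed n w (a:ℕ)).1 / (Ed n w (a:ℕ)).2 < (Ed n w (b:ℕ)).1 / (Ed n w (b:ℕ)).2 := by
    rw [div_lt_div_iff₀ hsva hsub, hva1, hva2, hvb1, hvb2]
    nlinarith [trig_cross hxm.1 hxy hym.2]
  have hK1 : (Ed n w (b:ℕ)).2 - (Ed n w (a:ℕ)).2 < (Ed n w (b:ℕ)).1 - (Ed n w (a:ℕ)).1 := by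
    rw [hva1, hva2, hvb1, hvb2]
    linarith [trig_K1 hxm.1 hxy hym.2]
  have hK2 : (Ed n w (a:ℕ)).2 - (Ed n w (b:ℕ)).2 < (Ed n w (b:ℕ)).1 - (Ed n w (a:ℕ)).1 := by
    rw [hva1, hva2, hvb1, hvb2]
    linarith [trig_K2 hxm.1 hxy hym.2]
  have hcomp := fun y => Fd_compare hn w (Equiv.swap a b * w) (a:ℕ) (b:ℕ) hab' hbn
    hEa hEb hEo hm hK1 hK2 y
  have hpF : p.1 = Fd n w p.2 := border_eval w hn hp
  have hqF : q.1 = Fd n (Equiv.swap a b * w) p.2 := by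
    rw [hpq]; exact border_eval _ hn hq
  have hYva : (vert n (Real.pi/4) w (a:ℕ)).2 = Yd n w (a:ℕ) := Y_vert w han.le
  have hYvb : (vert n (Real.pi/4) w ((b:ℕ)+1)).2 = Yd n w ((b:ℕ)+1) := Y_vert w (by omega)
  by_cases hwin : Yd n w (a:ℕ) < p.2 ∧ p.2 < Yd n w ((b:ℕ)+1)
  · have hlt : p.1 < q.1 := by
      rw [hpF, hqF]; exact (hcomp p.2).2 hwin.1 hwin.2
    exact ⟨hlt.le, ⟨fun _ => by rw [hYva, hYvb]; exact hwin, fun _ => hlt⟩⟩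
  · have heq : p.1 = q.1 := by
      rw [hpF, hqF]
      refine ((hcomp p.2).1 ?_).symm
      rcases not_and_or.mp hwin with h | h
      exacts [Or.inl (not_lt.mp h), Or.inr (not_lt.mp h)]
    refine ⟨heq.le, ⟨fun hlt => absurd heq hlt.ne, ?_⟩⟩
    rintro ⟨h1, h2⟩
    rw [hYva] at h1
    rw [hYvb] at h2
    exact (hwin ⟨h1, h2⟩).elim
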